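/- For all integers r ≥ 2 and x ∈ [r, 2r), the function ϑ(x) = x ln x + (x−1) ln(r−1) − (x−1) ln((r+1)x − 2r) − ln(2r − x) satisfies ϑ(x) ≥ 0. -/

import Mathlib

open Real Set

private lemma vt_hasDerivAt_f (R : ℝ) (y : ℝ) (hy0 : 0 < y) (hB : 0 < (R+1)*y - 2*R)
    (hC : 0 < 2*R - y) :
    HasDerivAt (fun y : ℝ => y * log y + (y-1) * log (R-1)
        - (y-1) * log ((R+1)*y - 2*R) - log (2*R - y))
      (log y + 1 + log (R-1) - log ((R+1)*y - 2*R)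
        - (y-1)*(R+1)/((R+1)*y-2*R) + 1/(2*R-y)) y := by
  have h1 : HasDerivAt (fun y : ℝ => y * log y) (log y + 1) y := by
    have := (hasDerivAt_id y).mul (Real.hasDerivAt_log hy0.ne')
    refine this.congr_deriv ?_
    field_simp
    simp only [id_eq]
    ring
  have h2 : HasDerivAt (fun y : ℝ => (y-1) * log (R-1)) (log (R-1)) y := by
    have := ((hasDerivAt_id y).sub_const 1).mul_const (log (R-1))
    refine this.congr_deriv ?_
    ring
  have hBin : HasDerivAt (fun y : ℝ => (R+1)*y - 2*R) (R+1) y := by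
    have := ((hasDerivAt_id y).const_mul (R+1)).sub_const (2*R)
    refine this.congr_deriv ?_
    ring
  have hlogB : HasDerivAt (fun y : ℝ => log ((R+1)*y - 2*R)) ((R+1)/((R+1)*y-2*R)) y := by
    have := (Real.hasDerivAt_log hB.ne').comp y hBin
    refine this.congr_deriv ?_
    field_simp
  have h3 : HasDerivAt (fun y : ℝ => (y-1) * log ((R+1)*y - 2*R))
      (log ((R+1)*y - 2*R) + (y-1)*((R+1)/((R+1)*y-2*R))) y := by
    have := ((hasDerivAt_id y).sub_const 1).mul hlogB
    refine this.congr_deriv ?_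
    simp only [id_eq]
    ring
  have hCin : HasDerivAt (fun y : ℝ => 2*R - y) (-1) y := by
    exact ((hasDerivAt_const y (2*R)).sub (hasDerivAt_id y)).congr_deriv (by ring)
  have h4 : HasDerivAt (fun y : ℝ => log (2*R - y)) (-(1/(2*R-y))) y := by
    have := (Real.hasDerivAt_log hC.ne').comp y hCin
    refine this.congr_deriv ?_
    field_simp
  have := ((h1.add h2).sub h3).sub h4
  refine this.congr_deriv ?_
  try simp only [id_eq]
  ring

private lemma vt_hasDerivAt_g (R : ℝ) (y : ℝ) (hy0 : 0 < y) (hB : 0 < (R+1)*y - 2*R)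
    (hC : 0 < 2*R - y) :
    HasDerivAt (fun y : ℝ => log y + 1 + log (R-1) - log ((R+1)*y - 2*R)
        - (y-1)*(R+1)/((R+1)*y-2*R) + 1/(2*R-y))
      (1/y - (R+1)/((R+1)*y-2*R)
        - ((R+1)*((R+1)*y-2*R) - (y-1)*(R+1)*(R+1))/((R+1)*y-2*R)^2
        + 1/(2*R-y)^2) y := by
  have h1 : HasDerivAt (fun y : ℝ => log y + 1 + log (R-1)) (1/y) y := by
    have := ((Real.hasDerivAt_log hy0.ne').add_const 1).add_const (log (R-1))
    refine this.congr_deriv ?_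
    field_simp
  have hBin : HasDerivAt (fun y : ℝ => (R+1)*y - 2*R) (R+1) y := by
    have := ((hasDerivAt_id y).const_mul (R+1)).sub_const (2*R)
    refine this.congr_deriv ?_
    ring
  have hlogB : HasDerivAt (fun y : ℝ => log ((R+1)*y - 2*R)) ((R+1)/((R+1)*y-2*R)) y := by
    have := (Real.hasDerivAt_log hB.ne').comp y hBin
    refine this.congr_deriv ?_
    field_simp
  have hnum : HasDerivAt (fun y : ℝ => (y-1)*(R+1)) (R+1) y := by
    have := ((hasDerivAt_id y).sub_const 1).mul_const (R+1)
    refine this.congr_deriv ?_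
    ring
  have h3 : HasDerivAt (fun y : ℝ => (y-1)*(R+1)/((R+1)*y-2*R))
      (((R+1)*((R+1)*y-2*R) - (y-1)*(R+1)*(R+1))/((R+1)*y-2*R)^2) y := by
    have := hnum.div hBin hB.ne'
    refine this.congr_deriv ?_
    try ring
  have hCin : HasDerivAt (fun y : ℝ => 2*R - y) (-1) y := by
    exact ((hasDerivAt_const y (2*R)).sub (hasDerivAt_id y)).congr_deriv (by ring)
  have h4 : HasDerivAt (fun y : ℝ => 1/(2*R-y)) (1/(2*R-y)^2) y := by
    have := (hasDerivAt_const y (1:ℝ)).div hCin hC.ne'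
    refine this.congr_deriv ?_
    try field_simp
    ring
  exact ((h1.sub hlogB).sub h3).add h4

theorem vartheta_nonneg (r : ℕ) (hr : 2 ≤ r) (x : ℝ) (hx1 : (r : ℝ) ≤ x) (hx2 : x < 2 * r) :
    0 ≤ x * Real.log x + (x - 1) * Real.log ((r : ℝ) - 1)
        - (x - 1) * Real.log (((r : ℝ) + 1) * x - 2 * r) - Real.log (2 * r - x) := by
  have hR : (2:ℝ) ≤ (r:ℝ) := by exact_mod_cast hr
  set R : ℝ := (r:ℝ) with hRdef
  set f : ℝ → ℝ := fun y => y * log y + (y-1) * log (R-1)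
      - (y-1) * log ((R+1)*y - 2*R) - log (2*R - y) with hf
  set g : ℝ → ℝ := fun y => log y + 1 + log (R-1) - log ((R+1)*y - 2*R)
      - (y-1)*(R+1)/((R+1)*y-2*R) + 1/(2*R-y) with hg
  -- positivity facts on Ico R (2R)
  have hbasic : ∀ y ∈ Ico R (2*R), 0 < y ∧ 0 < (R+1)*y - 2*R ∧ 0 < 2*R - y := by
    intro y hy
    obtain ⟨hy1, hy2⟩ := hy
    have hy0 : 0 < y := by linarith
    refine ⟨hy0, ?_, by linarith⟩
    nlinarith
  have hRmem : R ∈ Ico R (2*R) := ⟨le_refl R, by linarith⟩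
  have hxmem : x ∈ Ico R (2*R) := ⟨hx1, hx2⟩
  -- g' nonneg on interior
  have hgderiv : ∀ y ∈ interior (Ico R (2*R)), 0 ≤ deriv g y := by
    intro y hy
    rw [interior_Ico] at hy
    obtain ⟨hy1, hy2⟩ := hy
    obtain ⟨hy0, hB, hC⟩ := hbasic y ⟨le_of_lt hy1, hy2⟩
    have hD := vt_hasDerivAt_g R y hy0 hB hC
    rw [← hg] at hD
    rw [hD.deriv]
    have key : 1/y - (R+1)/((R+1)*y-2*R)
        - ((R+1)*((R+1)*y-2*R) - (y-1)*(R+1)*(R+1))/((R+1)*y-2*R)^2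
        + 1/(2*R-y)^2
        = 4*R^2*(y-R)*((R+2)*y-4*R)/(((R+1)*y-2*R)^2*(2*R-y)^2*y) := by
      generalize ha : (R+1)*y-2*R = a at hB ⊢
      generalize hb : 2*R-y = b at hC ⊢
      have := hB.ne'
      have := hC.ne'
      have := hy0.ne'
      field_simp
      subst ha hb
      ring
    rw [key]
    apply div_nonneg
    · have h1 : (0:ℝ) ≤ y - R := by linarith
      have h2 : (0:ℝ) ≤ (R+2)*y - 4*R := by nlinarith
      positivity
    · positivity
  -- g continuous on Ico
  have hgdiff : ∀ y ∈ Ico R (2*R), HasDerivAt g _ y := fun y hy => by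
    obtain ⟨hy0, hB, hC⟩ := hbasic y hy
    exact (vt_hasDerivAt_g R y hy0 hB hC)
  have hgcont : ContinuousOn g (Ico R (2*R)) := fun y hy => by
    obtain ⟨hy0, hB, hC⟩ := hbasic y hy
    exact (vt_hasDerivAt_g R y hy0 hB hC).continuousAt.continuousWithinAt
  have hgmono : MonotoneOn g (Ico R (2*R)) := by
    apply monotoneOn_of_deriv_nonneg (convex_Ico _ _) hgcont _ hgderiv
    intro y hy
    rw [interior_Ico] at hy
    obtain ⟨hy0, hB, hC⟩ := hbasic y ⟨le_of_lt hy.1, hy.2⟩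
    exact (vt_hasDerivAt_g R y hy0 hB hC).differentiableAt.differentiableWithinAt
  -- g R = 0
  have hR1 : (0:ℝ) < R - 1 := by linarith
  have hgR : g R = 0 := by
    have hBR : (R+1)*R - 2*R = R * (R-1) := by ring
    have hR0 : (0:ℝ) < R := by linarith
    have hdiv : (R-1)*(R+1)/(R*(R-1)) = (R+1)/R := by
      rw [div_eq_div_iff (by positivity) hR0.ne']
      ring
    have hstep : g R = 1 - (R+1)/R + 1/R := by
      simp only [hg, hBR, hdiv]
      rw [Real.log_mul hR0.ne' hR1.ne']
      ring
    rw [hstep]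
    field_simp
    ring
  -- g nonneg on Ico
  have hgnn : ∀ y ∈ Ico R (2*R), 0 ≤ g y := by
    intro y hy
    have := hgmono hRmem hy hy.1
    linarith [hgR ▸ this]
  -- f monotone on Ico
  have hfcont : ContinuousOn f (Ico R (2*R)) := fun y hy => by
    obtain ⟨hy0, hB, hC⟩ := hbasic y hy
    exact (vt_hasDerivAt_f R y hy0 hB hC).continuousAt.continuousWithinAt
  have hfmono : MonotoneOn f (Ico R (2*R)) := by
    apply monotoneOn_of_deriv_nonneg (convex_Ico _ _) hfcont
    · intro y hy
      rw [interior_Ico] at hy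
      obtain ⟨hy0, hB, hC⟩ := hbasic y ⟨le_of_lt hy.1, hy.2⟩
      exact (vt_hasDerivAt_f R y hy0 hB hC).differentiableAt.differentiableWithinAt
    · intro y hy
      rw [interior_Ico] at hy
      obtain ⟨hy0, hB, hC⟩ := hbasic y ⟨le_of_lt hy.1, hy.2⟩
      have hD := vt_hasDerivAt_f R y hy0 hB hC
      rw [← hf] at hD
      rw [hD.deriv]
      exact hgnn y ⟨le_of_lt hy.1, hy.2⟩
  -- f R = 0
  have hfR : f R = 0 := by
    have hBR : (R+1)*R - 2*R = R * (R-1) := by ring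
    have hR0 : (0:ℝ) < R := by linarith
    simp only [hf, hBR]
    rw [Real.log_mul hR0.ne' hR1.ne']
    ring
  have := hfmono hRmem hxmem hx1
  have hfx : f x = x * Real.log x + (x - 1) * Real.log (R - 1)
      - (x - 1) * Real.log ((R + 1) * x - 2 * R) - Real.log (2 * R - x) := rfl
  rw [hfR] at this
  linarith [this]
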